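/- G_{s,p}(a) admits the product formula G_{s,p}(a) = Π_{j=0}^{s−1} exp( Σ_{i=0}^{s−j−1} (ζ_{p^{s−j−i}}−1)(p − 1 − ζ_{p^{s−j−i}} − ζ_{p^{s−j−i}}^2 − ⋯ − ζ_{p^{s−j−i}}^{p−1}) a_j^{p^i}/p^i ). -/

import Mathlib

open PowerSeries Classical

/-- Formal exponential `exp f = Σ_n f^n / n!` of a one-variable power series. -/
noncomputable def pexp {K : Type} [Field K] (f : PowerSeries K) : PowerSeries K :=
  PowerSeries.mk fun d =>
    ∑ n ∈ Finset.range (d + 1), PowerSeries.coeff d (f ^ n) / (Nat.factorial n : K)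

/-- Substitution `f(a)` of a multivariate power series `a` (with zero constant term) into a
one-variable power series `f`. -/
noncomputable def substOne {K : Type} [Field K] {σ : Type}
    (a : MvPowerSeries σ K) (f : PowerSeries K) : MvPowerSeries σ K :=
  fun d => ∑ n ∈ Finset.range (d.sum (fun _ k => k) + 1),
    PowerSeries.coeff n f * MvPowerSeries.coeff d (a ^ n)

section Infra

variable {K : Type} [Field K] {σ : Type}

lemma sum_eq_degree (d : σ →₀ ℕ) : (d.sum fun _ k => k) = d.degree := rfl

lemma degree_add (u v : σ →₀ ℕ) : (u + v).degree = u.degree + v.degree := by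
  rw [← sum_eq_degree, ← sum_eq_degree, ← sum_eq_degree]
  exact Finsupp.sum_add_index' (fun _ => rfl) (fun _ _ _ => rfl)

lemma coeff_substOne (a : MvPowerSeries σ K) (f : PowerSeries K) (d : σ →₀ ℕ) :
    MvPowerSeries.coeff d (substOne a f) =
      ∑ n ∈ Finset.range (d.degree + 1),
        PowerSeries.coeff n f * MvPowerSeries.coeff d (a ^ n) := rfl

/-- vanishing of low coefficients of powers -/
lemma coeff_pow_eq_zero {b : MvPowerSeries σ K} (hb : MvPowerSeries.constantCoeff b = 0)
    {n : ℕ} : ∀ {d : σ →₀ ℕ}, d.degree < n → MvPowerSeries.coeff d (b ^ n) = 0 := by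
  induction n with
  | zero => intro d h; omega
  | succ n ih =>
    intro d h
    rw [pow_succ', MvPowerSeries.coeff_mul]
    apply Finset.sum_eq_zero
    rintro ⟨u, v⟩ huv
    rw [Finset.HasAntidiagonal.mem_antidiagonal] at huv
    by_cases hu : u = 0
    · subst hu
      rw [MvPowerSeries.coeff_zero_eq_constantCoeff, hb, zero_mul]
    · have hu1 : 1 ≤ u.degree := by
        rcases Nat.eq_zero_or_pos u.degree with h0 | h1
        · exact absurd ((Finsupp.degree_eq_zero_iff u).mp h0) hu
        · exact h1
      have : v.degree < n := by
        have := degree_add u v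
        rw [huv] at this
        omega
      rw [ih this, mul_zero]

lemma coeff_pow_eq_zero' {f : PowerSeries K} (hf : PowerSeries.constantCoeff f = 0)
    {m : ℕ} : ∀ {n : ℕ}, n < m → PowerSeries.coeff n (f ^ m) = 0 := by
  induction m with
  | zero => intro n h; omega
  | succ m ih =>
    intro n h
    rw [pow_succ', PowerSeries.coeff_mul]
    apply Finset.sum_eq_zero
    rintro ⟨u, v⟩ huv
    rw [Finset.HasAntidiagonal.mem_antidiagonal] at huv
    by_cases hu : u = 0
    · subst hu
      rw [PowerSeries.coeff_zero_eq_constantCoeff, hf, zero_mul]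
    · have : v < m := by omega
      rw [ih this, mul_zero]

/-- substOne as a sum with arbitrary large truncation -/
lemma coeff_substOne_trunc {b : MvPowerSeries σ K}
    (hb : MvPowerSeries.constantCoeff b = 0) (f : PowerSeries K) (d : σ →₀ ℕ)
    {N : ℕ} (hN : d.degree ≤ N) :
    MvPowerSeries.coeff d (substOne b f) =
      ∑ n ∈ Finset.range (N + 1), PowerSeries.coeff n f * MvPowerSeries.coeff d (b ^ n) := by
  rw [coeff_substOne]
  apply Finset.sum_subset
  · intro x hx
    rw [Finset.mem_range] at hx ⊢
    omega
  · intro x _ hx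
    rw [Finset.mem_range] at hx
    rw [coeff_pow_eq_zero hb (by omega), mul_zero]

lemma substOne_add (b : MvPowerSeries σ K) (f g : PowerSeries K) :
    substOne b (f + g) = substOne b f + substOne b g := by
  ext d
  rw [map_add, coeff_substOne, coeff_substOne, coeff_substOne, ← Finset.sum_add_distrib]
  exact Finset.sum_congr rfl fun n _ => by rw [map_add, add_mul]

lemma substOne_sum {ι : Type*} (b : MvPowerSeries σ K) (t : Finset ι)
    (f : ι → PowerSeries K) :
    substOne b (∑ i ∈ t, f i) = ∑ i ∈ t, substOne b (f i) := by
  classical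
  induction t using Finset.induction with
  | empty =>
    ext d
    rw [Finset.sum_empty, Finset.sum_empty, coeff_substOne, map_zero]
    exact Finset.sum_eq_zero fun n _ => by rw [map_zero, zero_mul]
  | insert _ _ h ih =>
    rw [Finset.sum_insert h, Finset.sum_insert h, substOne_add, ih]

lemma substOne_monomial {b : MvPowerSeries σ K}
    (hb : MvPowerSeries.constantCoeff b = 0) (n : ℕ) (c : K) :
    substOne b (PowerSeries.monomial n c) = c • b ^ n := by
  ext d
  rw [coeff_substOne_trunc hb _ d (le_max_left d.degree n),
    MvPowerSeries.coeff_smul]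
  rw [Finset.sum_eq_single n]
  · rw [PowerSeries.coeff_monomial_same]
  · intro m _ hm
    rw [PowerSeries.coeff_monomial, if_neg hm, zero_mul]
  · intro hn
    exfalso
    exact hn (Finset.mem_range.mpr (by omega))

lemma substOne_mul {b : MvPowerSeries σ K}
    (hb : MvPowerSeries.constantCoeff b = 0) (f g : PowerSeries K) :
    substOne b (f * g) = substOne b f * substOne b g := by
  ext d
  set D := d.degree with hD
  clear_value D
  rw [coeff_substOne_trunc hb _ d (le_of_eq hD.symm), MvPowerSeries.coeff_mul]
  have key : ∀ uv ∈ Finset.HasAntidiagonal.antidiagonal d,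
      (MvPowerSeries.coeff uv.1 (substOne b f)) * (MvPowerSeries.coeff uv.2 (substOne b g))
      = ∑ n ∈ Finset.range (D + 1), ∑ m ∈ Finset.range (D + 1),
          (PowerSeries.coeff n f * MvPowerSeries.coeff uv.1 (b ^ n)) *
          (PowerSeries.coeff m g * MvPowerSeries.coeff uv.2 (b ^ m)) := by
    rintro ⟨u, v⟩ huv
    rw [Finset.HasAntidiagonal.mem_antidiagonal] at huv
    have hdeg : u.degree + v.degree = D := by rw [hD, ← huv]; exact (degree_add u v).symm
    rw [coeff_substOne_trunc hb f u (N := D) (by omega),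
      coeff_substOne_trunc hb g v (N := D) (by omega), Finset.sum_mul_sum]
  rw [Finset.sum_congr rfl key]
  rw [Finset.sum_comm]
  -- now: ∑ n, ∑ uv, ∑ m ... ; push further
  have step2 : ∀ n ∈ Finset.range (D+1),
      (∑ uv ∈ Finset.HasAntidiagonal.antidiagonal d, ∑ m ∈ Finset.range (D + 1),
        (PowerSeries.coeff n f * MvPowerSeries.coeff uv.1 (b ^ n)) *
        (PowerSeries.coeff m g * MvPowerSeries.coeff uv.2 (b ^ m)))
      = ∑ m ∈ Finset.range (D + 1), (PowerSeries.coeff n f * PowerSeries.coeff m g)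
          * MvPowerSeries.coeff d (b ^ (n + m)) := by
    intro n _
    rw [Finset.sum_comm]
    refine Finset.sum_congr rfl fun m _ => ?_
    rw [pow_add, MvPowerSeries.coeff_mul, Finset.mul_sum]
    refine Finset.sum_congr rfl fun uv _ => by ring
  rw [Finset.sum_congr rfl step2]
  -- RHS: expand coeff of product f*g
  have rhs : ∀ k ∈ Finset.range (D+1),
      PowerSeries.coeff k (f * g) * MvPowerSeries.coeff d (b ^ k)
      = ∑ nm ∈ Finset.HasAntidiagonal.antidiagonal k,
          (PowerSeries.coeff nm.1 f * PowerSeries.coeff nm.2 g) *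
            MvPowerSeries.coeff d (b ^ k) := by
    intro k _
    rw [PowerSeries.coeff_mul, Finset.sum_mul]
  rw [Finset.sum_congr rfl rhs]
  -- Both sides are sums over pairs (n, m); LHS over n,m ≤ D; RHS over n+m = k ≤ D.
  have shrink : ∀ n ∈ Finset.range (D+1),
      (∑ m ∈ Finset.range (D + 1), (PowerSeries.coeff n f * PowerSeries.coeff m g)
          * MvPowerSeries.coeff d (b ^ (n + m)))
      = ∑ m ∈ Finset.range (D + 1 - n), (PowerSeries.coeff n f * PowerSeries.coeff m g)
          * MvPowerSeries.coeff d (b ^ (n + m)) := by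
    intro n hn
    rw [Finset.mem_range] at hn
    refine (Finset.sum_subset ?_ ?_).symm
    · intro m hm; rw [Finset.mem_range] at hm ⊢; omega
    · intro m _ hm
      rw [Finset.mem_range] at hm
      rw [coeff_pow_eq_zero hb (by omega), mul_zero]
  rw [Finset.sum_congr rfl shrink]
  rw [Finset.sum_sigma']
  rw [Finset.sum_sigma']
  refine Finset.sum_nbij' (i := fun x => ⟨x.2.1, x.2.2⟩)
    (j := fun x => ⟨x.1 + x.2, (x.1, x.2)⟩) ?_ ?_ ?_ ?_ ?_
  · rintro ⟨k, n, m⟩ h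
    simp only [Finset.mem_sigma, Finset.mem_range, Finset.HasAntidiagonal.mem_antidiagonal] at h ⊢
    omega
  · rintro ⟨n, m⟩ h
    simp only [Finset.mem_sigma, Finset.mem_range] at h
    refine Finset.mem_sigma.mpr ⟨Finset.mem_range.mpr ?_, Finset.HasAntidiagonal.mem_antidiagonal.mpr rfl⟩
    show n + m < D + 1
    omega
  · rintro ⟨k, n, m⟩ h
    simp only [Finset.mem_sigma, Finset.mem_range, Finset.HasAntidiagonal.mem_antidiagonal] at h
    simp only [Sigma.mk.inj_iff, heq_eq_eq]
    exact ⟨h.2, trivial⟩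
  · rintro ⟨n, m⟩ _
    rfl
  · rintro ⟨k, n, m⟩ h
    simp only [Finset.mem_sigma, Finset.mem_range, Finset.HasAntidiagonal.mem_antidiagonal] at h
    simp only []
    rw [h.2]

lemma substOne_one (b : MvPowerSeries σ K) : substOne b 1 = 1 := by
  ext d
  rw [coeff_substOne, Finset.sum_eq_single 0]
  · rw [pow_zero]; simp
  · intro m _ hm
    rw [PowerSeries.coeff_one, if_neg hm, zero_mul]
  · intro h; exact absurd (Finset.mem_range.mpr (by omega)) h

lemma substOne_pow {b : MvPowerSeries σ K}
    (hb : MvPowerSeries.constantCoeff b = 0) (f : PowerSeries K) (n : ℕ) :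
    substOne b (f ^ n) = (substOne b f) ^ n := by
  induction n with
  | zero => rw [pow_zero, pow_zero, substOne_one]
  | succ n ih => rw [pow_succ, pow_succ, substOne_mul hb, ih]

/-- multivariate truncated exponential -/
noncomputable def mexp (g : MvPowerSeries σ K) : MvPowerSeries σ K :=
  fun d => ∑ n ∈ Finset.range (d.degree + 1),
    MvPowerSeries.coeff d (g ^ n) / (Nat.factorial n : K)

lemma coeff_mexp (g : MvPowerSeries σ K) (d : σ →₀ ℕ) :
    MvPowerSeries.coeff d (mexp g) = ∑ n ∈ Finset.range (d.degree + 1),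
      MvPowerSeries.coeff d (g ^ n) / (Nat.factorial n : K) := rfl

lemma coeff_mexp_trunc {g : MvPowerSeries σ K}
    (hg : MvPowerSeries.constantCoeff g = 0) (d : σ →₀ ℕ) {N : ℕ} (hN : d.degree ≤ N) :
    MvPowerSeries.coeff d (mexp g) = ∑ n ∈ Finset.range (N + 1),
      MvPowerSeries.coeff d (g ^ n) / (Nat.factorial n : K) := by
  rw [coeff_mexp]
  apply Finset.sum_subset
  · intro x hx; rw [Finset.mem_range] at hx ⊢; omega
  · intro x _ hx
    rw [Finset.mem_range] at hx
    rw [coeff_pow_eq_zero hg (by omega), zero_div]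

lemma substOne_pexp {b : MvPowerSeries σ K}
    (hb : MvPowerSeries.constantCoeff b = 0) {f : PowerSeries K}
    (hf : PowerSeries.constantCoeff f = 0) :
    substOne b (pexp f) = mexp (substOne b f) := by
  ext d
  have hsb : MvPowerSeries.constantCoeff (substOne b f) = 0 := by
    rw [← MvPowerSeries.coeff_zero_eq_constantCoeff, coeff_substOne]
    rw [map_zero]
    rw [Finset.sum_range_one, pow_zero]
    simp [PowerSeries.coeff_zero_eq_constantCoeff, hf]
  rw [coeff_mexp_trunc hsb d (le_refl _), coeff_substOne]
  have e1 : ∀ n ∈ Finset.range (d.degree + 1),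
      PowerSeries.coeff n (pexp f) * MvPowerSeries.coeff d (b ^ n)
      = ∑ m ∈ Finset.range (d.degree + 1),
          (PowerSeries.coeff n (f ^ m) / (Nat.factorial m : K)) *
            MvPowerSeries.coeff d (b ^ n) := by
    intro n hn
    rw [Finset.mem_range] at hn
    rw [pexp, PowerSeries.coeff_mk, Finset.sum_mul]
    refine Finset.sum_subset ?_ ?_
    · intro x hx; rw [Finset.mem_range] at hx ⊢; omega
    · intro m _ hm
      rw [Finset.mem_range] at hm
      rw [coeff_pow_eq_zero' hf (by omega), zero_div, zero_mul]
  rw [Finset.sum_congr rfl e1, Finset.sum_comm]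
  refine Finset.sum_congr rfl fun m _ => ?_
  rw [← substOne_pow hb, coeff_substOne, Finset.sum_div]
  exact Finset.sum_congr rfl fun n _ => by ring

lemma mexp_add {g h : MvPowerSeries σ K}
    (hg : MvPowerSeries.constantCoeff g = 0)
    (hh : MvPowerSeries.constantCoeff h = 0) [CharZero K] :
    mexp (g + h) = mexp g * mexp h := by
  ext d
  have hgh : MvPowerSeries.constantCoeff (g + h) = 0 := by
    rw [map_add, hg, hh, add_zero]
  set D := d.degree with hD
  clear_value D
  rw [coeff_mexp_trunc hgh d (le_of_eq hD.symm), MvPowerSeries.coeff_mul]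
  -- LHS: expand (g+h)^n via add_pow
  have e1 : ∀ n ∈ Finset.range (D + 1),
      MvPowerSeries.coeff d ((g + h) ^ n) / (Nat.factorial n : K)
      = ∑ i ∈ Finset.range (n + 1),
          MvPowerSeries.coeff d (g ^ i * h ^ (n - i)) /
            ((Nat.factorial i : K) * (Nat.factorial (n - i) : K)) := by
    intro n _
    rw [add_pow, map_sum, Finset.sum_div]
    refine Finset.sum_congr rfl fun i hi => ?_
    rw [Finset.mem_range] at hi
    have hin : i ≤ n := by omega
    have hC : ((n.choose i : ℕ) : MvPowerSeries σ K)
        = MvPowerSeries.C ((n.choose i : ℕ) : K) := by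
      rw [map_natCast]
    rw [hC, MvPowerSeries.coeff_mul_C]
    have hfac : (Nat.factorial i : K) * (Nat.factorial (n - i) : K) * (n.choose i : K)
        = (Nat.factorial n : K) := by
      rw [← Nat.cast_mul, ← Nat.cast_mul, ← Nat.choose_mul_factorial_mul_factorial hin]
      ring_nf
    have h1 : (Nat.factorial n : K) ≠ 0 := Nat.cast_ne_zero.mpr (Nat.factorial_ne_zero n)
    have h2 : (Nat.factorial i : K) ≠ 0 := Nat.cast_ne_zero.mpr (Nat.factorial_ne_zero i)
    have h3 : (Nat.factorial (n - i) : K) ≠ 0 :=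
      Nat.cast_ne_zero.mpr (Nat.factorial_ne_zero (n - i))
    field_simp
    rw [← hfac]
    ring
  rw [Finset.sum_congr rfl e1]
  -- RHS
  have e2 : ∀ uv ∈ Finset.HasAntidiagonal.antidiagonal d,
      MvPowerSeries.coeff uv.1 (mexp g) * MvPowerSeries.coeff uv.2 (mexp h)
      = ∑ i ∈ Finset.range (D + 1), ∑ j ∈ Finset.range (D + 1),
          (MvPowerSeries.coeff uv.1 (g ^ i) * MvPowerSeries.coeff uv.2 (h ^ j)) /
            ((Nat.factorial i : K) * (Nat.factorial j : K)) := by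
    rintro ⟨u, v⟩ huv
    rw [Finset.HasAntidiagonal.mem_antidiagonal] at huv
    have hdeg : u.degree + v.degree = D := by rw [hD, ← huv]; exact (degree_add u v).symm
    rw [coeff_mexp_trunc hg u (N := D) (by omega), coeff_mexp_trunc hh v (N := D) (by omega),
      Finset.sum_mul_sum]
    refine Finset.sum_congr rfl fun i _ => Finset.sum_congr rfl fun j _ => ?_
    rw [div_mul_div_comm]
  rw [Finset.sum_congr rfl e2, Finset.sum_comm]
  have e3 : ∀ i ∈ Finset.range (D + 1),
      (∑ uv ∈ Finset.HasAntidiagonal.antidiagonal d, ∑ j ∈ Finset.range (D + 1),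
        (MvPowerSeries.coeff uv.1 (g ^ i) * MvPowerSeries.coeff uv.2 (h ^ j)) /
          ((Nat.factorial i : K) * (Nat.factorial j : K)))
      = ∑ j ∈ Finset.range (D + 1 - i),
          MvPowerSeries.coeff d (g ^ i * h ^ j) /
            ((Nat.factorial i : K) * (Nat.factorial j : K)) := by
    intro i hi
    rw [Finset.mem_range] at hi
    rw [Finset.sum_comm]
    have e4 : ∀ j ∈ Finset.range (D + 1),
        (∑ uv ∈ Finset.HasAntidiagonal.antidiagonal d,
          (MvPowerSeries.coeff uv.1 (g ^ i) * MvPowerSeries.coeff uv.2 (h ^ j)) /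
            ((Nat.factorial i : K) * (Nat.factorial j : K)))
        = MvPowerSeries.coeff d (g ^ i * h ^ j) /
            ((Nat.factorial i : K) * (Nat.factorial j : K)) := by
      intro j _
      rw [MvPowerSeries.coeff_mul, Finset.sum_div]
    rw [Finset.sum_congr rfl e4]
    refine (Finset.sum_subset ?_ ?_).symm
    · intro x hx; rw [Finset.mem_range] at hx ⊢; omega
    · intro j _ hj
      rw [Finset.mem_range] at hj
      have : MvPowerSeries.coeff d (g ^ i * h ^ j) = 0 := by
        rw [MvPowerSeries.coeff_mul]
        apply Finset.sum_eq_zero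
        rintro ⟨u, v⟩ huv
        rw [Finset.HasAntidiagonal.mem_antidiagonal] at huv
        show MvPowerSeries.coeff u (g ^ i) * MvPowerSeries.coeff v (h ^ j) = 0
        have hdeg : u.degree + v.degree = D := by rw [hD, ← huv]; exact (degree_add u v).symm
        by_cases hu : u.degree < i
        · rw [coeff_pow_eq_zero hg hu, zero_mul]
        · rw [coeff_pow_eq_zero hh (by omega), mul_zero]
      rw [this, zero_div]
  rw [Finset.sum_congr rfl e3]
  -- now triangle reindex: LHS sum over n ≤ D, i ≤ n; RHS over i ≤ D, j ≤ D - i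
  rw [Finset.sum_sigma', Finset.sum_sigma']
  refine Finset.sum_nbij' (i := fun x => ⟨x.2, x.1 - x.2⟩)
    (j := fun x => ⟨x.1 + x.2, x.1⟩) ?_ ?_ ?_ ?_ ?_
  · rintro ⟨n, i⟩ h
    simp only [Finset.mem_sigma, Finset.mem_range] at h
    refine Finset.mem_sigma.mpr ⟨Finset.mem_range.mpr ?_, Finset.mem_range.mpr ?_⟩
    · show i < D + 1; omega
    · show n - i < D + 1 - i; omega
  · rintro ⟨i, j⟩ h
    simp only [Finset.mem_sigma, Finset.mem_range] at h
    refine Finset.mem_sigma.mpr ⟨Finset.mem_range.mpr ?_, Finset.mem_range.mpr ?_⟩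
    · show i + j < D + 1; omega
    · show i < i + j + 1; omega
  · rintro ⟨n, i⟩ h
    simp only [Finset.mem_sigma, Finset.mem_range] at h
    exact Sigma.ext (by show i + (n - i) = n; omega) HEq.rfl
  · rintro ⟨i, j⟩ h
    simp only [Finset.mem_sigma, Finset.mem_range] at h
    exact Sigma.ext rfl (heq_of_eq (by show i + j - i = j; omega))
  · rintro ⟨n, i⟩ h
    rfl

lemma mexp_zero : mexp (0 : MvPowerSeries σ K) = 1 := by
  ext d
  rw [coeff_mexp, Finset.sum_eq_single 0]
  · rw [pow_zero, Nat.factorial_zero, Nat.cast_one, div_one]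
  · intro n _ hn
    rw [zero_pow hn, map_zero, zero_div]
  · intro h; exact absurd (Finset.mem_range.mpr (by omega)) h

lemma constantCoeff_mexp (g : MvPowerSeries σ K) :
    MvPowerSeries.constantCoeff (mexp g) = 1 := by
  rw [← MvPowerSeries.coeff_zero_eq_constantCoeff, coeff_mexp, map_zero,
    Finset.sum_range_one, pow_zero, Nat.factorial_zero, Nat.cast_one, div_one]
  simp

lemma constantCoeff_substOne (b : MvPowerSeries σ K) (f : PowerSeries K) :
    MvPowerSeries.constantCoeff (substOne b f) = PowerSeries.constantCoeff f := by
  rw [← MvPowerSeries.coeff_zero_eq_constantCoeff, coeff_substOne, map_zero,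
    Finset.sum_range_one, pow_zero]
  simp [PowerSeries.coeff_zero_eq_constantCoeff]

lemma mexp_inv {g : MvPowerSeries σ K} [CharZero K]
    (hg : MvPowerSeries.constantCoeff g = 0) :
    (mexp g)⁻¹ = mexp (-g) := by
  have h1 : MvPowerSeries.constantCoeff (mexp g) ≠ 0 := by
    rw [constantCoeff_mexp]; exact one_ne_zero
  rw [MvPowerSeries.inv_eq_iff_mul_eq_one h1]
  have hng : MvPowerSeries.constantCoeff (-g) = 0 := by rw [map_neg, hg, neg_zero]
  rw [← mexp_add hng hg, neg_add_cancel, mexp_zero]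

lemma mexp_sum {ι : Type*} [CharZero K] (t : Finset ι) (f : ι → MvPowerSeries σ K)
    (hf : ∀ i ∈ t, MvPowerSeries.constantCoeff (f i) = 0) :
    mexp (∑ i ∈ t, f i) = ∏ i ∈ t, mexp (f i) := by
  classical
  induction t using Finset.induction with
  | empty => rw [Finset.sum_empty, Finset.prod_empty, mexp_zero]
  | insert i t hi ih =>
    rw [Finset.sum_insert hi, Finset.prod_insert hi,
      mexp_add (hf i (Finset.mem_insert_self i t)) ?_, ih fun j hj => hf j (Finset.mem_insert_of_mem hj)]
    rw [map_sum]
    exact Finset.sum_eq_zero fun j hj => hf j (Finset.mem_insert_of_mem hj)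

lemma tri {M : Type*} [AddCommMonoid M] (s : ℕ) (f : ℕ → ℕ → M) :
    ∑ i ∈ Finset.range s, ∑ k ∈ Finset.range (s - i), f i k
      = ∑ m ∈ Finset.range s, ∑ i ∈ Finset.range (m + 1), f i (m - i) := by
  rw [Finset.sum_sigma', Finset.sum_sigma']
  refine Finset.sum_nbij' (i := fun x => ⟨x.1 + x.2, x.1⟩)
    (j := fun x => ⟨x.2, x.1 - x.2⟩) ?_ ?_ ?_ ?_ ?_
  · rintro ⟨i, k⟩ h
    simp only [Finset.mem_sigma, Finset.mem_range] at h
    refine Finset.mem_sigma.mpr ⟨Finset.mem_range.mpr ?_, Finset.mem_range.mpr ?_⟩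
    · show i + k < s; omega
    · show i < i + k + 1; omega
  · rintro ⟨m, i⟩ h
    simp only [Finset.mem_sigma, Finset.mem_range] at h
    refine Finset.mem_sigma.mpr ⟨Finset.mem_range.mpr ?_, Finset.mem_range.mpr ?_⟩
    · show i < s; omega
    · show m - i < s - i; omega
  · rintro ⟨i, k⟩ h
    simp only [Finset.mem_sigma, Finset.mem_range] at h
    exact Sigma.ext rfl (heq_of_eq (by show i + k - i = k; omega))
  · rintro ⟨m, i⟩ h
    simp only [Finset.mem_sigma, Finset.mem_range] at h
    exact Sigma.ext (by show i + (m - i) = m; omega) HEq.rfl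
  · rintro ⟨i, k⟩ h
    simp only [Finset.mem_sigma, Finset.mem_range] at h
    show f i k = f i (i + k - i)
    congr 1
    omega

lemma ghost_sum (p : ℕ) [Fact p.Prime] [CharZero K] (s : ℕ) (c : ℕ → K)
    (x : ℕ → MvPowerSeries σ K) :
    ∑ i ∈ Finset.range s, ∑ k ∈ Finset.range (s - i), (c (i + k) / (p:K) ^ k) • (x i) ^ (p ^ k)
    = ∑ m ∈ Finset.range s, (c m / (p:K) ^ m) •
        ∑ i ∈ Finset.range (m + 1), (p : MvPowerSeries σ K) ^ i * (x i) ^ (p ^ (m - i)) := by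
  rw [tri]
  refine Finset.sum_congr rfl fun m hm => ?_
  rw [Finset.smul_sum]
  refine Finset.sum_congr rfl fun i hi => ?_
  rw [Finset.mem_range] at hi
  have hp : (p:K) ≠ 0 := Nat.cast_ne_zero.mpr (Nat.Prime.ne_zero Fact.out)
  have hcast : (p : MvPowerSeries σ K) ^ i = MvPowerSeries.C ((p:K) ^ i) := by
    rw [map_pow, map_natCast]
  rw [hcast, ← MvPowerSeries.smul_eq_C_mul, smul_smul]
  congr 1
  have h1 : (p:K) ^ (m - i) ≠ 0 := pow_ne_zero _ hp
  have h2 : (p:K) ^ m ≠ 0 := pow_ne_zero _ hp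
  rw [div_mul_eq_mul_div, div_eq_div_iff h1 h2, mul_assoc, ← pow_add (p:K),
    show i + (m - i) = m from by omega]

end Infra

/-- `E_{j,p}(t) = exp (Σ_{i<j} (ζ_{p^{j-i}} - 1) t^{p^i}/p^i)`, with `ζ_{p^r} = ζ^{p^{s-r}}`. -/
noncomputable def Esingle (p s : ℕ) {K : Type} [Field K] (ζ : K) (j : ℕ) :
    PowerSeries K :=
  pexp (∑ i ∈ Finset.range j,
    (PowerSeries.monomial (p ^ i)) ((ζ ^ p ^ (s - j + i) - 1) / ((p : K) ^ i)))

/-- `E_{n,p}(a) = Π_{i<n} E_{n-i,p}(a_i)` on the first `n` components of a Witt vector. -/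
noncomputable def EW (p s : ℕ) {K : Type} [Field K] (ζ : K) {σ : Type} (n : ℕ)
    (a : WittVector p (MvPowerSeries σ K)) [Fact p.Prime] : MvPowerSeries σ K :=
  ∏ i ∈ Finset.range n, substOne (a.coeff i) (Esingle p s ζ (n - i))

/-- `G_{s,p}(a) = E_{s,p}(p·a) / E_{s-1,p}(a)`. -/
noncomputable def GW (p s : ℕ) {K : Type} [Field K] (ζ : K) {σ : Type}
    (a : WittVector p (MvPowerSeries σ K)) [Fact p.Prime] : MvPowerSeries σ K :=
  EW p s ζ s (p • a) * (EW p s ζ (s - 1) a)⁻¹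

section Main

variable {K : Type} [Field K] {σ : Type}

lemma constantCoeff_monomial_arg (p : ℕ) (hp : 1 ≤ p) (j : ℕ) (γ : ℕ → K) :
    PowerSeries.constantCoeff
      (∑ k ∈ Finset.range j, (PowerSeries.monomial (p ^ k)) (γ k)) = 0 := by
  rw [map_sum]
  refine Finset.sum_eq_zero fun k _ => ?_
  rw [← PowerSeries.coeff_zero_eq_constantCoeff, PowerSeries.coeff_monomial,
    if_neg (show ¬ (0:ℕ) = p ^ k by positivity)]

lemma substOne_Esingle (p s : ℕ) (hp : 1 ≤ p) (ζ : K) (j : ℕ) {b : MvPowerSeries σ K}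
    (hb : MvPowerSeries.constantCoeff b = 0) :
    substOne b (Esingle p s ζ j)
      = mexp (∑ k ∈ Finset.range j,
          ((ζ ^ p ^ (s - j + k) - 1) / ((p : K) ^ k)) • b ^ (p ^ k)) := by
  rw [Esingle, substOne_pexp hb (constantCoeff_monomial_arg p hp j _)]
  rw [substOne_sum]
  exact congrArg mexp (Finset.sum_congr rfl fun k _ => substOne_monomial hb (p ^ k) _)

lemma smulpow_constantCoeff {b : MvPowerSeries σ K}
    (hb : MvPowerSeries.constantCoeff b = 0) (γ : K) {n : ℕ} (hn : 1 ≤ n) :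
    MvPowerSeries.constantCoeff (γ • b ^ n) = 0 := by
  rw [MvPowerSeries.smul_eq_C_mul, map_mul, map_pow, hb, zero_pow (by omega), mul_zero]

lemma EW_eq (p s : ℕ) [Fact p.Prime] [CharZero K] (ζ : K) (n : ℕ)
    (a : WittVector p (MvPowerSeries σ K))
    (hc : ∀ i, MvPowerSeries.constantCoeff (a.coeff i) = 0) :
    EW p s ζ n a = mexp (∑ i ∈ Finset.range n, ∑ k ∈ Finset.range (n - i),
      ((ζ ^ p ^ (s - (n - i) + k) - 1) / ((p : K) ^ k)) • (a.coeff i) ^ (p ^ k)) := by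
  have hp : 1 ≤ p := (Fact.out : p.Prime).one_lt.le
  rw [EW, mexp_sum]
  · refine Finset.prod_congr rfl fun i hi => ?_
    rw [substOne_Esingle p s hp ζ (n - i) (hc i)]
  · intro i _
    rw [map_sum]
    refine Finset.sum_eq_zero fun k _ => ?_
    exact smulpow_constantCoeff (hc i) _ (Nat.one_le_pow _ _ (Fact.out : p.Prime).pos)

end Main

section Main2

variable {K : Type} [Field K] {σ : Type}

lemma substOne_pexp_monomials (p : ℕ) (hp : 1 ≤ p) {b : MvPowerSeries σ K}
    (hb : MvPowerSeries.constantCoeff b = 0) (j : ℕ) (γ : ℕ → K) :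
    substOne b (pexp (∑ i ∈ Finset.range j, (PowerSeries.monomial (p ^ i)) (γ i)))
      = mexp (∑ i ∈ Finset.range j, γ i • b ^ (p ^ i)) := by
  rw [substOne_pexp hb (constantCoeff_monomial_arg p hp j γ), substOne_sum]
  exact congrArg mexp (Finset.sum_congr rfl fun k _ => substOne_monomial hb (p ^ k) _)

lemma scalar_id (p : ℕ) (hp : 1 ≤ p) (η : K) :
    (η - 1) * ((p : K) - 1 - ∑ t ∈ Finset.Icc 1 (p - 1), η ^ t)
      = (p : K) * (η - 1) - (η ^ p - 1) := by
  have h1 : Finset.Icc 1 (p - 1) = Finset.Ico 1 p := by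
    rw [← Finset.Ico_add_one_right_eq_Icc]
    congr 1
    omega
  have h3 := geom_sum_mul η p
  have h2 : ∑ t ∈ Finset.range p, η ^ t = 1 + ∑ t ∈ Finset.Ico 1 p, η ^ t := by
    rw [Finset.range_eq_Ico, ← Finset.sum_Ico_consecutive _ (Nat.zero_le 1) hp]
    congr 1
    rw [Finset.sum_Ico_eq_sum_range]
    simp
  rw [h2] at h3
  rw [h1]
  linear_combination -h3

lemma ghost_formula (p : ℕ) [Fact p.Prime] (m : ℕ)
    (b : WittVector p (MvPowerSeries σ K)) :
    ∑ i ∈ Finset.range (m + 1), (p : MvPowerSeries σ K) ^ i * (b.coeff i) ^ (p ^ (m - i))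
      = WittVector.ghostComponent m b := by
  rw [WittVector.ghostComponent_apply, aeval_wittPolynomial]

lemma ghost_psmul (p : ℕ) [Fact p.Prime] (m : ℕ)
    (a : WittVector p (MvPowerSeries σ K)) :
    WittVector.ghostComponent m (p • a)
      = (p : MvPowerSeries σ K) * WittVector.ghostComponent m a := by
  rw [map_nsmul, nsmul_eq_mul]

end Main2

/-- The product formula
`G_{s,p}(a) = Π_{j<s} exp ( Σ_{i<s-j} (ζ_{p^{s-j-i}}-1)(p - 1 - ζ_{p^{s-j-i}} - ⋯ -
ζ_{p^{s-j-i}}^{p-1}) a_j^{p^i}/p^i )`, where `ζ_{p^{s-j-i}} = ζ^{p^{j+i}}`, as an identity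
of formal power series in the variables `a_0, …, a_{s-1}`. -/
theorem stmt_9 (p s : ℕ) [Fact p.Prime] (hs : 1 ≤ s) (K : Type) [Field K] [CharZero K]
    (ζ : K) (hζ : IsPrimitiveRoot ζ (p ^ s)) :
    ∀ a : WittVector p (MvPowerSeries ℕ K),
      a = WittVector.mk p (fun i => if i < s then MvPowerSeries.X i else 0) →
      GW p s ζ a =
        ∏ j ∈ Finset.range s,
          substOne (MvPowerSeries.X j : MvPowerSeries ℕ K)
            (pexp (∑ i ∈ Finset.range (s - j),
              (PowerSeries.monomial (p ^ i))
                ((ζ ^ p ^ (j + i) - 1) *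
                  ((p : K) - 1 - ∑ t ∈ Finset.Icc 1 (p - 1), (ζ ^ p ^ (j + i)) ^ t) /
                    ((p : K) ^ i)))) := by
  intro a ha
  obtain ⟨b, hb⟩ : ∃ b, b = p • a := ⟨_, rfl⟩
  have hp : p.Prime := Fact.out
  have hp1 : 1 ≤ p := hp.one_lt.le
  have hac : ∀ i, MvPowerSeries.constantCoeff (a.coeff i) = 0 := by
    intro i
    rw [ha, WittVector.coeff_mk]
    split
    · exact MvPowerSeries.constantCoeff_X i
    · exact map_zero _
  have hmap : WittVector.map (MvPowerSeries.constantCoeff) a = 0 := by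
    apply WittVector.ext
    intro n
    rw [WittVector.map_coeff, WittVector.zero_coeff, hac]
  have hpac : ∀ i, MvPowerSeries.constantCoeff (b.coeff i) = 0 := by
    intro i
    have h0 : WittVector.map (MvPowerSeries.constantCoeff) b = 0 := by
      rw [hb, map_nsmul, hmap, smul_zero]
    calc MvPowerSeries.constantCoeff (b.coeff i)
        = (WittVector.map (MvPowerSeries.constantCoeff) b).coeff i :=
          (WittVector.map_coeff _ _ i).symm
      _ = 0 := by rw [h0, WittVector.zero_coeff]
  -- big sums
  set L1 := ∑ i ∈ Finset.range s, ∑ k ∈ Finset.range (s - i),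
      ((ζ ^ p ^ (s - (s - i) + k) - 1) / ((p : K) ^ k)) • (b.coeff i) ^ (p ^ k) with hL1
  set L2 := ∑ i ∈ Finset.range (s - 1), ∑ k ∈ Finset.range (s - 1 - i),
      ((ζ ^ p ^ (s - (s - 1 - i) + k) - 1) / ((p : K) ^ k)) • (a.coeff i) ^ (p ^ k) with hL2
  have hL1c : MvPowerSeries.constantCoeff L1 = 0 := by
    rw [hL1, map_sum]
    refine Finset.sum_eq_zero fun i _ => ?_
    rw [map_sum]
    exact Finset.sum_eq_zero fun k _ =>
      smulpow_constantCoeff (hpac i) _ (Nat.one_le_pow _ _ hp.pos)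
  have hL2c : MvPowerSeries.constantCoeff L2 = 0 := by
    rw [hL2, map_sum]
    refine Finset.sum_eq_zero fun i _ => ?_
    rw [map_sum]
    exact Finset.sum_eq_zero fun k _ =>
      smulpow_constantCoeff (hac i) _ (Nat.one_le_pow _ _ hp.pos)
  have hGW : GW p s ζ a = mexp (L1 + -L2) := by
    rw [GW, ← hb, EW_eq p s ζ s b hpac, EW_eq p s ζ (s - 1) a hac, ← hL1]
    have : ∑ i ∈ Finset.range (s - 1), ∑ k ∈ Finset.range (s - 1 - i),
        ((ζ ^ p ^ (s - (s - 1 - i) + k) - 1) / ((p : K) ^ k)) • (a.coeff i) ^ (p ^ k) = L2 := rfl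
    rw [this, mexp_inv hL2c, ← mexp_add hL1c (by rw [map_neg, hL2c, neg_zero])]
  rw [hGW]
  -- RHS
  have hrhs : ∀ j ∈ Finset.range s,
      substOne (MvPowerSeries.X j : MvPowerSeries ℕ K)
        (pexp (∑ i ∈ Finset.range (s - j),
          (PowerSeries.monomial (p ^ i))
            ((ζ ^ p ^ (j + i) - 1) *
              ((p : K) - 1 - ∑ t ∈ Finset.Icc 1 (p - 1), (ζ ^ p ^ (j + i)) ^ t) /
                ((p : K) ^ i))))
      = mexp (∑ i ∈ Finset.range (s - j),
          ((ζ ^ p ^ (j + i) - 1) *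
              ((p : K) - 1 - ∑ t ∈ Finset.Icc 1 (p - 1), (ζ ^ p ^ (j + i)) ^ t) /
                ((p : K) ^ i)) • (MvPowerSeries.X j : MvPowerSeries ℕ K) ^ (p ^ i)) := by
    intro j _
    exact substOne_pexp_monomials p hp1 (MvPowerSeries.constantCoeff_X j) (s - j) _
  rw [Finset.prod_congr rfl hrhs, ← mexp_sum]
  · -- main argument identity
    apply congrArg mexp
    have e1 : L1 = ∑ m ∈ Finset.range s, ((ζ ^ p ^ m - 1) / ((p : K) ^ m)) •
        ((p : MvPowerSeries ℕ K) * WittVector.ghostComponent m a) := by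
      rw [hL1]
      calc ∑ i ∈ Finset.range s, ∑ k ∈ Finset.range (s - i),
            ((ζ ^ p ^ (s - (s - i) + k) - 1) / ((p : K) ^ k)) • (b.coeff i) ^ (p ^ k)
          = ∑ i ∈ Finset.range s, ∑ k ∈ Finset.range (s - i),
            (((fun m => ζ ^ p ^ m - 1) (i + k)) / ((p : K) ^ k)) •
              ((b.coeff) i) ^ (p ^ k) := by
            refine Finset.sum_congr rfl fun i hi => Finset.sum_congr rfl fun k _ => ?_
            rw [Finset.mem_range] at hi
            rw [show s - (s - i) + k = i + k from by omega]
        _ = ∑ m ∈ Finset.range s, (((fun m => ζ ^ p ^ m - 1) m) / ((p : K) ^ m)) •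
              ∑ i ∈ Finset.range (m + 1),
                (p : MvPowerSeries ℕ K) ^ i * ((b.coeff) i) ^ (p ^ (m - i)) :=
            ghost_sum p s (fun m => ζ ^ p ^ m - 1) b.coeff
        _ = _ := by
            refine Finset.sum_congr rfl fun m _ => ?_
            rw [ghost_formula, hb, ghost_psmul]
    have e2 : L2 = ∑ m ∈ Finset.range s, ((ζ ^ p ^ (m + 1) - 1) / ((p : K) ^ m)) •
        WittVector.ghostComponent m a := by
      rw [hL2]
      calc ∑ i ∈ Finset.range (s - 1), ∑ k ∈ Finset.range (s - 1 - i),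
            ((ζ ^ p ^ (s - (s - 1 - i) + k) - 1) / ((p : K) ^ k)) • (a.coeff i) ^ (p ^ k)
          = ∑ i ∈ Finset.range (s - 1), ∑ k ∈ Finset.range (s - 1 - i),
            (((fun m => ζ ^ p ^ (m + 1) - 1) (i + k)) / ((p : K) ^ k)) •
              ((a.coeff) i) ^ (p ^ k) := by
            refine Finset.sum_congr rfl fun i hi => Finset.sum_congr rfl fun k _ => ?_
            rw [Finset.mem_range] at hi
            rw [show s - (s - 1 - i) + k = i + k + 1 from by omega]
        _ = ∑ m ∈ Finset.range (s - 1),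
              (((fun m => ζ ^ p ^ (m + 1) - 1) m) / ((p : K) ^ m)) •
              ∑ i ∈ Finset.range (m + 1),
                (p : MvPowerSeries ℕ K) ^ i * ((a.coeff) i) ^ (p ^ (m - i)) :=
            ghost_sum p (s - 1) (fun m => ζ ^ p ^ (m + 1) - 1) a.coeff
        _ = ∑ m ∈ Finset.range (s - 1), ((ζ ^ p ^ (m + 1) - 1) / ((p : K) ^ m)) •
              WittVector.ghostComponent m a := by
            refine Finset.sum_congr rfl fun m _ => ?_
            rw [ghost_formula]
        _ = _ := by
            conv_rhs => rw [show s = (s - 1) + 1 from by omega]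
            rw [Finset.sum_range_succ]
            have hz : ζ ^ p ^ (s - 1 + 1) = 1 := by
              rw [show s - 1 + 1 = s from by omega]
              exact hζ.pow_eq_one
            rw [hz, sub_self, zero_div, zero_smul, add_zero]
    rw [e1, e2]
    have e3 : ∑ j ∈ Finset.range s, ∑ i ∈ Finset.range (s - j),
        ((ζ ^ p ^ (j + i) - 1) *
          ((p : K) - 1 - ∑ t ∈ Finset.Icc 1 (p - 1), (ζ ^ p ^ (j + i)) ^ t) /
            ((p : K) ^ i)) • (MvPowerSeries.X j : MvPowerSeries ℕ K) ^ (p ^ i)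
        = ∑ m ∈ Finset.range s,
            (((fun m => (ζ ^ p ^ m - 1) *
              ((p : K) - 1 - ∑ t ∈ Finset.Icc 1 (p - 1), (ζ ^ p ^ m) ^ t)) m) / ((p : K) ^ m)) •
            WittVector.ghostComponent m a := by
      calc ∑ j ∈ Finset.range s, ∑ i ∈ Finset.range (s - j),
            ((ζ ^ p ^ (j + i) - 1) *
              ((p : K) - 1 - ∑ t ∈ Finset.Icc 1 (p - 1), (ζ ^ p ^ (j + i)) ^ t) /
                ((p : K) ^ i)) • (MvPowerSeries.X j : MvPowerSeries ℕ K) ^ (p ^ i)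
          = ∑ j ∈ Finset.range s, ∑ i ∈ Finset.range (s - j),
            (((fun m => (ζ ^ p ^ m - 1) *
              ((p : K) - 1 - ∑ t ∈ Finset.Icc 1 (p - 1), (ζ ^ p ^ m) ^ t)) (j + i)) /
                ((p : K) ^ i)) • ((a.coeff) j) ^ (p ^ i) := by
            refine Finset.sum_congr rfl fun j hj => Finset.sum_congr rfl fun i _ => ?_
            rw [Finset.mem_range] at hj
            rw [ha, WittVector.coeff_mk]
            rw [if_pos hj]
        _ = ∑ m ∈ Finset.range s,
              (((fun m => (ζ ^ p ^ m - 1) *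
                ((p : K) - 1 - ∑ t ∈ Finset.Icc 1 (p - 1), (ζ ^ p ^ m) ^ t)) m) /
                  ((p : K) ^ m)) •
              ∑ i ∈ Finset.range (m + 1),
                (p : MvPowerSeries ℕ K) ^ i * ((a.coeff) i) ^ (p ^ (m - i)) :=
            ghost_sum p s (fun m => (ζ ^ p ^ m - 1) *
              ((p : K) - 1 - ∑ t ∈ Finset.Icc 1 (p - 1), (ζ ^ p ^ m) ^ t)) a.coeff
        _ = _ := by
            refine Finset.sum_congr rfl fun m _ => ?_
            rw [ghost_formula]
    rw [e3]
    rw [← Finset.sum_neg_distrib, ← Finset.sum_add_distrib]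
    refine Finset.sum_congr rfl fun m _ => ?_
    have hpcast : (p : MvPowerSeries ℕ K) = MvPowerSeries.C ((p : K)) :=
      (map_natCast _ p).symm
    rw [hpcast, ← MvPowerSeries.smul_eq_C_mul, smul_smul, ← neg_smul, ← add_smul]
    congr 1
    have hη : ζ ^ p ^ (m + 1) = (ζ ^ p ^ m) ^ p := by rw [pow_succ, pow_mul]
    have hsc := scalar_id p hp1 (ζ ^ p ^ m)
    have hpK : ((p : K) ^ m) ≠ 0 :=
      pow_ne_zero _ (Nat.cast_ne_zero.mpr hp.ne_zero)
    rw [hη]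
    linear_combination -(1 / ((p : K) ^ m)) * hsc
  · intro j _
    rw [map_sum]
    exact Finset.sum_eq_zero fun k _ =>
      smulpow_constantCoeff (MvPowerSeries.constantCoeff_X j) _ (Nat.one_le_pow _ _ hp.pos)
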